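/- Let n ≥ 1 and let x⃗ = (x₁, …, xₙ) ∈ ℝⁿ be a nonincreasing vector such that x₁ = x₂ = ⋯ = x_m > x_{m+1} ≥ ⋯ ≥ xₙ for some 1 ≤ m < n. Then for every α > 0, |B_α(x⃗) − x₁| ≤ (n/m) · e^{−α(x₁ − x_{m+1})} · ‖x⃗‖, where ‖·‖ is the Euclidean norm. -/

import Mathlib

/-- The Boltzmann operator `B_α(x) = (∑ i, x i · e^{α x i}) / (∑ i, e^{α x i})`. -/
noncomputable def boltzmann {n : ℕ} (α : ℝ) (x : Fin n → ℝ) : ℝ :=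
  (∑ i, x i * Real.exp (α * x i)) / (∑ i, Real.exp (α * x i))

theorem boltzmann_max_error_bound {n : ℕ} (hn : 1 ≤ n) (x : Fin n → ℝ)
    (hanti : ∀ i j : Fin n, i ≤ j → x j ≤ x i)
    (m : ℕ) (hm1 : 1 ≤ m) (hmn : m < n)
    (hconst : ∀ i : Fin n, (i : ℕ) < m → x i = x ⟨0, by omega⟩)
    (hgap : x ⟨m, hmn⟩ < x ⟨0, by omega⟩)
    (α : ℝ) (hα : 0 < α) :
    |boltzmann α x - x ⟨0, by omega⟩| ≤
      ((n : ℝ) / m) * Real.exp (-α * (x ⟨0, by omega⟩ - x ⟨m, hmn⟩)) *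
        Real.sqrt (∑ i, (x i) ^ 2) := by
  have hn0 : 0 < n := hn
  set i0 : Fin n := ⟨0, by omega⟩ with hi0
  set im : Fin n := ⟨m, hmn⟩ with him
  set M := x i0 with hMdef
  have hmax : ∀ i : Fin n, x i ≤ M := fun i => hanti i0 i (by simp [hi0, Fin.le_def])
  have hS : 0 < ∑ i, Real.exp (α * x i) :=
    Finset.sum_pos (fun i _ => Real.exp_pos _) ⟨i0, Finset.mem_univ _⟩
  have hnormnn : 0 ≤ Real.sqrt (∑ i, (x i) ^ 2) := Real.sqrt_nonneg _
  -- numerator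
  set N := ∑ i, (M - x i) * Real.exp (α * x i) with hNdef
  have hNnn : 0 ≤ N :=
    Finset.sum_nonneg fun i _ => mul_nonneg (by linarith [hmax i]) (Real.exp_pos _).le
  have hBM : |boltzmann α x - M| = N / (∑ i, Real.exp (α * x i)) := by
    rw [boltzmann, div_sub' (ne_of_gt hS), abs_div, abs_of_pos hS]
    congr 1
    rw [abs_sub_comm, abs_of_nonneg]
    · rw [hNdef, Finset.sum_mul, ← Finset.sum_sub_distrib]
      exact Finset.sum_congr rfl fun i _ => by ring
    · rw [Finset.sum_mul, sub_nonneg]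
      exact Finset.sum_le_sum fun i _ => by
        have := hmax i; nlinarith [Real.exp_pos (α * x i)]
  -- Cauchy-Schwarz: ∑ (M - x i) ≤ n * ‖x‖
  have hCS : ∑ i, (M - x i) ≤ (n : ℝ) * Real.sqrt (∑ i, (x i) ^ 2) := by
    set c : Fin n → ℝ := fun i => (if i = i0 then (n : ℝ) else 0) - 1 with hc
    have h1 : ∑ i, (M - x i) = ∑ i, c i * x i := by
      rw [Finset.sum_sub_distrib]
      simp only [hc, sub_mul, one_mul, ite_mul, zero_mul]
      rw [Finset.sum_sub_distrib, Finset.sum_ite_eq' Finset.univ i0 (fun i => (n:ℝ) * x i)]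
      simp [Finset.sum_const, ← hMdef, mul_comm]
    have h2 : ∑ i, (c i) ^ 2 ≤ (n : ℝ) ^ 2 := by
      have : ∑ i, (c i) ^ 2 = ((n:ℝ) - 1)^2 + ((n:ℝ) - 1) := by
        rw [← Finset.add_sum_erase _ _ (Finset.mem_univ i0)]
        have : ∀ i ∈ Finset.univ.erase i0, (c i)^2 = 1 := by
          intro i hi
          simp [hc, Finset.mem_erase.mp hi |>.1]
        rw [Finset.sum_congr rfl this]
        simp [hc, Finset.card_erase_of_mem, Finset.card_univ, Nat.cast_sub hn]
      rw [this]
      have : (1:ℝ) ≤ n := by exact_mod_cast hn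
      nlinarith
    rw [h1]
    calc ∑ i, c i * x i ≤ Real.sqrt ((∑ i, c i * x i)^2) := by
          rw [Real.sqrt_sq_eq_abs]; exact le_abs_self _
      _ ≤ Real.sqrt ((∑ i, (c i)^2) * ∑ i, (x i)^2) :=
          Real.sqrt_le_sqrt (Finset.sum_mul_sq_le_sq_mul_sq _ _ _)
      _ ≤ Real.sqrt ((n:ℝ)^2 * ∑ i, (x i)^2) := by
          apply Real.sqrt_le_sqrt
          exact mul_le_mul_of_nonneg_right h2 (Finset.sum_nonneg fun i _ => sq_nonneg _)
      _ = (n : ℝ) * Real.sqrt (∑ i, (x i)^2) := by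
          rw [Real.sqrt_mul (sq_nonneg _), Real.sqrt_sq (by positivity)]
  -- N ≤ exp(α x_m) * ∑ (M - x i)
  have hN1 : N ≤ Real.exp (α * x im) * ∑ i, (M - x i) := by
    rw [Finset.mul_sum]
    apply Finset.sum_le_sum
    intro i _
    rcases lt_or_ge (i : ℕ) m with h | h
    · have := hconst i h
      rw [hMdef] at this
      rw [this]
      simp [hMdef]
    · have hxi : x i ≤ x im := hanti im i (by simpa [him, Fin.le_def] using h)
      rw [mul_comm (Real.exp (α * x im))]
      exact mul_le_mul_of_nonneg_left
        (Real.exp_le_exp.mpr (mul_le_mul_of_nonneg_left hxi hα.le))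
        (by linarith [hmax i])
  -- S ≥ m * exp(α M)
  have hSge : (m : ℝ) * Real.exp (α * M) ≤ ∑ i, Real.exp (α * x i) := by
    calc (m : ℝ) * Real.exp (α * M)
        = ∑ _i ∈ Finset.Iio im, Real.exp (α * M) := by
          rw [Finset.sum_const, nsmul_eq_mul, Fin.card_Iio]
      _ = ∑ i ∈ Finset.Iio im, Real.exp (α * x i) := by
          apply Finset.sum_congr rfl
          intro i hi
          have hlt : (i : ℕ) < m := by simpa [him, Fin.lt_def] using Finset.mem_Iio.mp hi
          have := hconst i hlt
          rw [hMdef] at this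
          rw [this]
      _ ≤ ∑ i, Real.exp (α * x i) :=
          Finset.sum_le_sum_of_subset_of_nonneg (Finset.subset_univ _)
            fun i _ _ => (Real.exp_pos _).le
    
  have hm0 : (0:ℝ) < m := by exact_mod_cast hm1
  have hexpM : (0:ℝ) < Real.exp (α * M) := Real.exp_pos _
  rw [hBM]
  have hstep : N / (∑ i, Real.exp (α * x i)) ≤
      (Real.exp (α * x im) * ((n:ℝ) * Real.sqrt (∑ i, (x i)^2))) / ((m:ℝ) * Real.exp (α * M)) := by
    apply div_le_div₀ (by positivity) _ (by positivity) hSge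
    calc N ≤ Real.exp (α * x im) * ∑ i, (M - x i) := hN1
      _ ≤ Real.exp (α * x im) * ((n:ℝ) * Real.sqrt (∑ i, (x i)^2)) :=
          mul_le_mul_of_nonneg_left hCS (Real.exp_pos _).le
  refine hstep.trans (le_of_eq ?_)
  rw [show -α * (M - x im) = α * x im - α * M by ring, Real.exp_sub]
  field_simp
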